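/- Let H be a real inner product space and let X*, Y ∈ H with ‖X*‖ = 1, Y ≠ 0, and ‖Y − X*‖ < 1. Let φ ∈ [0, π/2) be defined by sin φ = ‖Y − X*‖. Then ‖Y/‖Y‖ − X*‖ ≤ (1/cos φ)·‖Y − X*‖; equivalently, ‖Y/‖Y‖ − X*‖ ≤ ‖Y − X*‖ / √(1 − ‖Y − X*‖²). -/

import Mathlib

private lemma normalization_perturbation_aux (ε r : ℝ) (hε0 : 0 ≤ ε)
    (hclose : ε < 1) (hd1 : -ε ≤ r - 1) (hd2 : r - 1 ≤ ε) :
    (ε ^ 2 - (r - 1) ^ 2) * (1 - ε ^ 2) ≤ ε ^ 2 * r := by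
  rcases le_or_gt 0 (r - 1) with hd | hd
  · nlinarith [sq_nonneg (r - 1), mul_nonneg (mul_nonneg hd hd)
      (by nlinarith : (0:ℝ) ≤ 1 - ε ^ 2), mul_nonneg (mul_nonneg hε0 hε0) hd]
  · have hq : (r - 1) ^ 2 ≤ -ε * (r - 1) := by nlinarith
    have hprod : 0 ≤ ε ^ 2 * (-ε * (r - 1) - (r - 1) ^ 2) :=
      mul_nonneg (sq_nonneg ε) (by linarith)
    have hg : 0 ≤ (r - 1) ^ 2 + ε ^ 3 * (r - 1) + ε ^ 2 * (r - 1) + ε ^ 4 := by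
      have h4 : 0 ≤ ε ^ 4 * ((1 - ε) * (3 + ε)) :=
        mul_nonneg (pow_nonneg hε0 4) (mul_nonneg (by linarith) (by linarith))
      nlinarith [sq_nonneg (r - 1 + ε ^ 2 * (1 + ε) / 2), h4]
    nlinarith [hg, hprod]


/-- Normalization perturbation bound on the unit sphere of a real inner product
space: if `‖X*‖ = 1`, `Y ≠ 0`, `‖Y − X*‖ < 1` and `sin φ = ‖Y − X*‖` with
`φ ∈ [0, π/2)`, then `‖Y/‖Y‖ − X*‖ ≤ (1/cos φ)·‖Y − X*‖`, equivalently
`‖Y/‖Y‖ − X*‖ ≤ ‖Y − X*‖ / √(1 − ‖Y − X*‖²)`. -/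
theorem normalization_perturbation_bound {H : Type*} [NormedAddCommGroup H]
    [InnerProductSpace ℝ H] (Xs Y : H)
    (hXs : ‖Xs‖ = 1) (hY : Y ≠ 0) (hclose : ‖Y - Xs‖ < 1)
    (φ : ℝ) (hφ0 : 0 ≤ φ) (hφπ : φ < Real.pi / 2)
    (hφ : Real.sin φ = ‖Y - Xs‖) :
    ‖‖Y‖⁻¹ • Y - Xs‖ ≤ (1 / Real.cos φ) * ‖Y - Xs‖ ∧
    ‖‖Y‖⁻¹ • Y - Xs‖ ≤ ‖Y - Xs‖ / Real.sqrt (1 - ‖Y - Xs‖ ^ 2) := by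
  set ε := ‖Y - Xs‖ with hε
  set r := ‖Y‖ with hr
  have hr0 : 0 < r := norm_pos_iff.mpr hY
  have hε0 : 0 ≤ ε := norm_nonneg _
  have hcos : 0 < Real.cos φ := Real.cos_pos_of_mem_Ioo
    ⟨lt_of_lt_of_le (neg_neg_of_pos (by positivity : (0:ℝ) < Real.pi / 2)) hφ0, hφπ⟩
  have hcos_sq : Real.cos φ ^ 2 = 1 - ε ^ 2 := by
    rw [Real.cos_sq', hφ]
  have hcos_eq : Real.cos φ = Real.sqrt (1 - ε ^ 2) := by
    rw [← hcos_sq, Real.sqrt_sq hcos.le]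
  have h1ε : 0 < 1 - ε ^ 2 := by nlinarith
  -- inner product computation
  have hip : (inner ℝ Y Xs : ℝ) = (r ^ 2 + 1 - ε ^ 2) / 2 := by
    have := @norm_sub_sq_real H _ _ Y Xs
    rw [← hε, ← hr, hXs] at this
    nlinarith [this]
  have hu : ‖‖Y‖⁻¹ • Y - Xs‖ ^ 2 = (ε ^ 2 - (r - 1) ^ 2) / r := by
    have h1 : ‖‖Y‖⁻¹ • Y‖ = 1 := by
      rw [norm_smul, Real.norm_eq_abs, abs_of_pos (inv_pos.mpr hr0), ← hr,
        inv_mul_cancel₀ hr0.ne']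
    have h2 : (inner ℝ (‖Y‖⁻¹ • Y) Xs : ℝ) = r⁻¹ * ((r ^ 2 + 1 - ε ^ 2) / 2) := by
      rw [real_inner_smul_left, hip, ← hr]
    have := @norm_sub_sq_real H _ _ (‖Y‖⁻¹ • Y) Xs
    rw [h1, hXs, h2] at this
    field_simp at this ⊢
    nlinarith [this]
  have habs : |r - 1| ≤ ε := by
    have := abs_norm_sub_norm_le Y Xs
    rwa [hXs, ← hε, ← hr] at this
  have hd1 : -ε ≤ r - 1 := (abs_le.mp habs).1
  have hd2 : r - 1 ≤ ε := (abs_le.mp habs).2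
  clear_value ε r
  rw [hr]
  -- main squared inequality
  have hkey : ‖‖Y‖⁻¹ • Y - Xs‖ ^ 2 ≤ ε ^ 2 / (1 - ε ^ 2) := by
    rw [hu, div_le_div_iff₀ hr0 h1ε]
    exact normalization_perturbation_aux ε r hε0 hclose hd1 hd2
  have hsqrt : Real.sqrt (1 - ε ^ 2) > 0 := Real.sqrt_pos.mpr h1ε
  have h2 : ‖‖Y‖⁻¹ • Y - Xs‖ ≤ ε / Real.sqrt (1 - ε ^ 2) := by
    have := Real.sqrt_le_sqrt hkey
    rwa [Real.sqrt_sq (norm_nonneg _), Real.sqrt_div (sq_nonneg ε),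
      Real.sqrt_sq hε0] at this
  refine ⟨?_, h2⟩
  rw [hcos_eq, one_div, inv_mul_eq_div]
  exact h2
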